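/- Let v be an irreducible Llull matrix on a finite set S. Then the function F(φ) = ∏_{{x,y}} φ_x^{v_{xy}} φ_y^{v_{yx}} / (φ_x + φ_y)^{t_{xy}} attains a maximum on the open simplex Φ = {φ : φ_x > 0, Σ φ_x = 1}. -/

import Mathlib

/-- The minimum score along a path `x, z₁, …, zₖ, y` (the list gives the
intermediate points; the empty list is the direct link from `x` to `y`). -/
def chainMin {S : Type*} (v : S → S → ℝ) : S → List S → S → ℝ
  | x, [], y => v x y
  | x, z :: l, y => min (v x z) (chainMin v z l y)

/-- Indirect (max-min) score: supremum over all paths from `x` to `y`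
of the minimum direct score along the path. -/
noncomputable def iScore {S : Type*} (v : S → S → ℝ) (x y : S) : ℝ :=
  sSup {r : ℝ | ∃ l : List S, r = chainMin v x l y}

/-- A Llull matrix: preference scores in `[0,1]` with `v x y + v y x ≤ 1`. -/
def IsLlull {S : Type*} (v : S → S → ℝ) : Prop :=
  ∀ x y : S, x ≠ y → 0 ≤ v x y ∧ v x y ≤ 1 ∧ v x y + v y x ≤ 1


open Finset in
/-- Zermelo's likelihood function
`F(φ) = ∏_{{x,y}} φ_x^{v_{xy}} φ_y^{v_{yx}} / (φ_x+φ_y)^{t_{xy}}`,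
written as a product over ordered pairs of distinct elements. -/
noncomputable def Zf {S : Type*} [Fintype S] [DecidableEq S]
    (v : S → S → ℝ) (φ : S → ℝ) : ℝ :=
  ∏ x, ∏ y ∈ Finset.univ.erase x, (φ x) ^ (v x y) / (φ x + φ y) ^ (v x y)

/-- The open simplex of normalized positive strength vectors. -/
def simplexPos (S : Type*) [Fintype S] : Set (S → ℝ) :=
  {φ | (∀ x, 0 < φ x) ∧ ∑ x, φ x = 1}

/-- Zermelo's system of equations
`Σ_{y≠x} t_{xy} φ_x/(φ_x+φ_y) = Σ_{y≠x} v_{xy}` for all `x`. -/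
def ZermeloEq {S : Type*} [Fintype S] [DecidableEq S]
    (v : S → S → ℝ) (φ : S → ℝ) : Prop :=
  ∀ x, ∑ y ∈ Finset.univ.erase x, (v x y + v y x) * (φ x / (φ x + φ y)) =
    ∑ y ∈ Finset.univ.erase x, v x y

section aux

open Finset Real

variable {S : Type*} [Fintype S] [DecidableEq S]

/-- One factor of Zermelo's function. -/
noncomputable def Zfac (v : S → S → ℝ) (φ : S → ℝ) (x y : S) : ℝ :=
  (φ x) ^ (v x y) / (φ x + φ y) ^ (v x y)

lemma Zf_eq_prod (v : S → S → ℝ) (φ : S → ℝ) :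
    Zf v φ = ∏ x, ∏ y ∈ Finset.univ.erase x, Zfac v φ x y := rfl

lemma Zfac_nonneg (v : S → S → ℝ) {φ : S → ℝ} (hφ : ∀ x, 0 ≤ φ x) (x y : S) :
    0 ≤ Zfac v φ x y :=
  div_nonneg (Real.rpow_nonneg (hφ x) _) (Real.rpow_nonneg (add_nonneg (hφ x) (hφ y)) _)

lemma Zfac_le_one (v : S → S → ℝ) {φ : S → ℝ} (hφ : ∀ x, 0 ≤ φ x) {x y : S}
    (hc : 0 ≤ v x y) : Zfac v φ x y ≤ 1 :=
  div_le_one_of_le₀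
    (Real.rpow_le_rpow (hφ x) (le_add_of_nonneg_right (hφ y)) hc)
    (Real.rpow_nonneg (add_nonneg (hφ x) (hφ y)) _)

lemma Zf_nonneg (v : S → S → ℝ) {φ : S → ℝ} (hφ : ∀ x, 0 ≤ φ x) : 0 ≤ Zf v φ := by
  rw [Zf_eq_prod]
  exact Finset.prod_nonneg fun x _ =>
    Finset.prod_nonneg fun y _ => Zfac_nonneg v hφ x y

lemma Zf_le_Zfac (v : S → S → ℝ) (hv : IsLlull v) {φ : S → ℝ} (hφ : ∀ x, 0 ≤ φ x)
    {a b : S} (hab : a ≠ b) : Zf v φ ≤ Zfac v φ a b := by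
  have hvnn : ∀ x y : S, y ∈ Finset.univ.erase x → 0 ≤ v x y := fun x y hy =>
    (hv x y (Ne.symm (Finset.ne_of_mem_erase hy))).1
  set g : S → ℝ := fun x => ∏ y ∈ Finset.univ.erase x, Zfac v φ x y with hg
  have hg0 : ∀ x, 0 ≤ g x := fun x =>
    Finset.prod_nonneg fun y _ => Zfac_nonneg v hφ x y
  have hg1 : ∀ x, g x ≤ 1 := fun x =>
    Finset.prod_le_one (fun y _ => Zfac_nonneg v hφ x y)
      (fun y hy => Zfac_le_one v hφ (hvnn x y hy))
  have h1 : Zf v φ ≤ g a := by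
    rw [Zf_eq_prod]
    calc (∏ x, g x) = g a * ∏ x ∈ Finset.univ.erase a, g x :=
          (Finset.mul_prod_erase Finset.univ g (Finset.mem_univ a)).symm
      _ ≤ g a * 1 := by
          refine mul_le_mul_of_nonneg_left ?_ (hg0 a)
          exact Finset.prod_le_one (fun x _ => hg0 x) (fun x _ => hg1 x)
      _ = g a := mul_one _
  have hb : b ∈ Finset.univ.erase a := Finset.mem_erase.mpr ⟨hab.symm, Finset.mem_univ b⟩
  have h2 : g a ≤ Zfac v φ a b := by
    calc g a = Zfac v φ a b * ∏ y ∈ (Finset.univ.erase a).erase b, Zfac v φ a y :=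
          (Finset.mul_prod_erase _ _ hb).symm
      _ ≤ Zfac v φ a b * 1 := by
          refine mul_le_mul_of_nonneg_left ?_ (Zfac_nonneg v hφ a b)
          exact Finset.prod_le_one (fun y _ => Zfac_nonneg v hφ a y)
            (fun y hy => Zfac_le_one v hφ
              (hvnn a y (Finset.mem_of_mem_erase hy)))
      _ = Zfac v φ a b := mul_one _
  exact h1.trans h2

/-- If a chain from a zero point to a nonzero point has positive min, there is a
crossing edge with positive score. -/
lemma crossing (v : S → S → ℝ) (φ : S → ℝ) :
    ∀ (l : List S) (a b : S), φ a = 0 → φ b ≠ 0 → 0 < chainMin v a l b →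
      ∃ p q, p ≠ q ∧ φ p = 0 ∧ φ q ≠ 0 ∧ 0 < v p q := by
  intro l
  induction l with
  | nil =>
    intro a b ha hb h
    exact ⟨a, b, fun h' => hb (h' ▸ ha), ha, hb, h⟩
  | cons z l ih =>
    intro a b ha hb h
    rw [chainMin] at h
    rcases lt_min_iff.mp h with ⟨h1, h2⟩
    by_cases hz : φ z = 0
    · exact ih z b hz hb h2
    · exact ⟨a, z, fun h' => hz (h' ▸ ha), ha, hz, h1⟩

/-- Zf vanishes at a point with a crossing edge. -/
lemma Zf_eq_zero (v : S → S → ℝ) {φ : S → ℝ} {p q : S} (hpq : p ≠ q)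
    (hp : φ p = 0) (hc : 0 < v p q) : Zf v φ = 0 := by
  rw [Zf_eq_prod]
  refine Finset.prod_eq_zero (Finset.mem_univ p) ?_
  refine Finset.prod_eq_zero (Finset.mem_erase.mpr ⟨hpq.symm, Finset.mem_univ q⟩) ?_
  rw [Zfac, hp, Real.zero_rpow hc.ne']
  exact zero_div _

lemma Zfac_continuousAt (v : S → S → ℝ) {φ₀ : S → ℝ} {x y : S}
    (hc : 0 ≤ v x y) (hd : 0 < φ₀ x + φ₀ y) :
    ContinuousAt (fun φ : S → ℝ => Zfac v φ x y) φ₀ := by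
  have hnum : ContinuousAt (fun φ : S → ℝ => (φ x) ^ (v x y)) φ₀ :=
    (Real.continuousAt_rpow_const _ _ (Or.inr hc)).comp (continuous_apply x).continuousAt
  have hden : ContinuousAt (fun φ : S → ℝ => (φ x + φ y) ^ (v x y)) φ₀ :=
    (Real.continuousAt_rpow_const _ _ (Or.inr hc)).comp
      ((continuous_apply x).add (continuous_apply y)).continuousAt
  exact hnum.div hden (Real.rpow_pos_of_pos hd _).ne'

/-- Existence of a positive chain from irreducibility. -/
lemma exists_pos_chain (v : S → S → ℝ) {a b : S}
    (h : 0 < iScore v a b) : ∃ l : List S, 0 < chainMin v a l b := by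
  by_contra hcon
  push_neg at hcon
  have : iScore v a b ≤ 0 := by
    refine Real.sSup_le ?_ le_rfl
    rintro r ⟨l, rfl⟩
    exact hcon l
  linarith

end aux

/-- For irreducible `v`, `F` attains a maximum on the open simplex. -/
theorem stmt6 {S : Type*} [Fintype S] [DecidableEq S] (hS : 2 ≤ Fintype.card S)
    (v : S → S → ℝ) (hv : IsLlull v)
    (hirr : ∀ x y : S, x ≠ y → 0 < iScore v x y) :
    ∃ φ ∈ simplexPos S, ∀ ψ ∈ simplexPos S, Zf v ψ ≤ Zf v φ := by
  haveI : Nonempty S := Fintype.card_pos_iff.mp (by omega)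
  set K : Set (S → ℝ) := stdSimplex ℝ S with hK
  have hKdef : ∀ φ : S → ℝ, φ ∈ K ↔ (∀ x, 0 ≤ φ x) ∧ ∑ x, φ x = 1 := fun φ => Iff.rfl
  -- the crossing-edge machinery at points with a zero coordinate
  have hcross : ∀ φ : S → ℝ, φ ∈ K → (∃ a, φ a = 0) →
      ∃ p q : S, p ≠ q ∧ φ p = 0 ∧ φ q ≠ 0 ∧ 0 < v p q := by
    rintro φ hφ ⟨a, ha⟩
    have hsum : ∑ x, φ x = 1 := hφ.2
    have hb : ∃ b, φ b ≠ 0 := by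
      by_contra hcon
      push_neg at hcon
      rw [Finset.sum_eq_zero (fun x _ => hcon x)] at hsum
      norm_num at hsum
    obtain ⟨b, hb⟩ := hb
    have hab : a ≠ b := fun h => hb (h ▸ ha)
    obtain ⟨l, hl⟩ := exists_pos_chain v (hirr a b hab)
    exact crossing v φ l a b ha hb hl
  -- continuity on K
  have hcont : ContinuousOn (Zf v) K := by
    intro φ₀ hφ₀
    by_cases hz : ∃ a, φ₀ a = 0
    · -- boundary point: squeeze to 0
      obtain ⟨p, q, hpq, hp, hq, hcpq⟩ := hcross φ₀ hφ₀ hz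
      have hZf0 : Zf v φ₀ = 0 := Zf_eq_zero v hpq hp hcpq
      have hq' : 0 < φ₀ q := lt_of_le_of_ne (hφ₀.1 q) (Ne.symm hq)
      have hd : 0 < φ₀ p + φ₀ q := by rw [hp]; simpa using hq'
      have hfc : ContinuousAt (fun φ : S → ℝ => Zfac v φ p q) φ₀ :=
        Zfac_continuousAt v (hv p q hpq).1 hd
      have hfac0 : Zfac v φ₀ p q = 0 := by
        rw [Zfac, hp, Real.zero_rpow hcpq.ne']; exact zero_div _
      have hten : Filter.Tendsto (fun φ : S → ℝ => Zfac v φ p q) (nhdsWithin φ₀ K) (nhds 0) := by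
        have := hfc.continuousWithinAt (s := K)
        rwa [ContinuousWithinAt, hfac0] at this
      have : Filter.Tendsto (Zf v) (nhdsWithin φ₀ K) (nhds 0) := by
        refine squeeze_zero' ?_ ?_ hten
        · filter_upwards [self_mem_nhdsWithin] with ψ hψ
          exact Zf_nonneg v hψ.1
        · filter_upwards [self_mem_nhdsWithin] with ψ hψ
          exact Zf_le_Zfac v hv hψ.1 hpq
      rw [ContinuousWithinAt, hZf0]
      exact this
    · -- interior point: plain continuity
      push_neg at hz
      have hpos : ∀ x, 0 < φ₀ x := fun x => lt_of_le_of_ne (hφ₀.1 x) (Ne.symm (hz x))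
      refine ContinuousAt.continuousWithinAt ?_
      have : ContinuousAt (fun φ => ∏ x, ∏ y ∈ Finset.univ.erase x, Zfac v φ x y) φ₀ := by
        refine tendsto_finset_prod _ fun x _ => ?_
        refine tendsto_finset_prod _ fun y hy => ?_
        have hxy : x ≠ y := Ne.symm (Finset.ne_of_mem_erase hy)
        exact Zfac_continuousAt v (hv x y hxy).1 (add_pos (hpos x) (hpos y))
      exact this
  -- compactness and nonemptiness
  have hKc : IsCompact K := isCompact_stdSimplex ℝ S
  have hu : (fun _ : S => (Fintype.card S : ℝ)⁻¹) ∈ K := by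
    constructor
    · intro x; positivity
    · rw [Finset.sum_const, Finset.card_univ, nsmul_eq_mul]
      exact mul_inv_cancel₀ (by positivity)
  obtain ⟨φ, hφK, hmax⟩ := hKc.exists_isMaxOn ⟨_, hu⟩ hcont
  have hmax' : ∀ ψ ∈ K, Zf v ψ ≤ Zf v φ := fun ψ hψ => hmax hψ
  -- Zf at the uniform point is positive
  have hupos : 0 < Zf v (fun _ : S => (Fintype.card S : ℝ)⁻¹) := by
    rw [Zf_eq_prod]
    refine Finset.prod_pos fun x _ => Finset.prod_pos fun y _ => ?_
    refine div_pos (Real.rpow_pos_of_pos (by positivity) _)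
      (Real.rpow_pos_of_pos (by positivity) _)
  have hZfφ : 0 < Zf v φ := lt_of_lt_of_le hupos (hmax' _ hu)
  -- the maximizer has positive coordinates
  have hφpos : ∀ x, 0 < φ x := by
    intro x
    rcases lt_or_eq_of_le (hφK.1 x) with h | h
    · exact h
    · exfalso
      obtain ⟨p, q, hpq, hp, _, hcpq⟩ := hcross φ hφK ⟨x, h.symm⟩
      rw [Zf_eq_zero v hpq hp hcpq] at hZfφ
      exact lt_irrefl 0 hZfφ
  refine ⟨φ, ⟨hφpos, hφK.2⟩, fun ψ hψ => hmax' ψ ⟨fun x => (hψ.1 x).le, hψ.2⟩⟩
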